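/- Let D(h₁,h₂) = Π(h₁ ⊔ h₂) − Π(h₁) − Π(h₂) + Π(h₁ ⊓ h₂). Then the commutator satisfies [Π(h₁), Π(h₂)] = D(h₁,h₂)·(Π(h₁) − Π(h₂)). -/

import Mathlib

variable {H : Type*} [NormedAddCommGroup H] [InnerProductSpace ℂ H] [FiniteDimensional ℂ H]

/-- The orthogonal projection onto a subspace, as an operator on `H`. -/
noncomputable def projOp (h : Submodule ℂ H) : H →ₗ[ℂ] H :=
  (h.subtypeL.comp (h.orthogonalProjection)).toLinearMap

/-- The quantum correction operator `D(h₁,h₂)`. -/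
noncomputable def Dop (h₁ h₂ : Submodule ℂ H) : H →ₗ[ℂ] H :=
  projOp (h₁ ⊔ h₂) - projOp h₁ - projOp h₂ + projOp (h₁ ⊓ h₂)

lemma projOp_apply_mem (h : Submodule ℂ H) (x : H) : projOp h x ∈ h := by
  simp [projOp]

lemma projOp_apply_of_mem (h : Submodule ℂ H) {x : H} (hx : x ∈ h) : projOp h x = x := by
  simp [projOp, Submodule.starProjection_eq_self_iff.2 hx]

lemma projOp_comp_of_le {a b : Submodule ℂ H} (hab : a ≤ b) :
    projOp a ∘ₗ projOp b = projOp a := by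
  ext x
  simp only [LinearMap.comp_apply, projOp, ContinuousLinearMap.coe_coe,
    ContinuousLinearMap.comp_apply, Submodule.subtypeL_apply]
  congr 1
  exact Submodule.orthogonalProjectionOnto_starProjection_of_le hab x

lemma projOp_comp_of_le' {a b : Submodule ℂ H} (hab : a ≤ b) :
    projOp b ∘ₗ projOp a = projOp a := by
  ext x
  exact projOp_apply_of_mem b (hab (projOp_apply_mem a x))

theorem stmt_5 (h₁ h₂ : Submodule ℂ H) :
    projOp h₁ ∘ₗ projOp h₂ - projOp h₂ ∘ₗ projOp h₁ =
      Dop h₁ h₂ ∘ₗ (projOp h₁ - projOp h₂) := by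
  have s1 : h₁ ≤ h₁ ⊔ h₂ := le_sup_left
  have s2 : h₂ ≤ h₁ ⊔ h₂ := le_sup_right
  have i1 : h₁ ⊓ h₂ ≤ h₁ := inf_le_left
  have i2 : h₁ ⊓ h₂ ≤ h₂ := inf_le_right
  simp only [Dop, LinearMap.sub_comp, LinearMap.add_comp, LinearMap.comp_sub,
    projOp_comp_of_le' s1, projOp_comp_of_le' s2, projOp_comp_of_le i1, projOp_comp_of_le i2,
    projOp_comp_of_le (le_refl h₁), projOp_comp_of_le (le_refl h₂)]
  abel
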